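/- Let y^{(j)} = F(m ∘ W c^{(j)}), j = 0,...,N_c-1, with 2L < N, and suppose the matrix V_m = (ω_N^{-n·ℓ})_{n∈S_N(m), ℓ∈Λ_{2L-1}} has full column rank (2L-1)², where S_N(m) is the set of indices n with m_n ≠ 0. If v = (v^{(0)},...,v^{(N_c-1)}) is any vector in the nullspace of the MOCCA matrix A_N, then the associated bivariate Laurent polynomials satisfy c^{(j)}(z)·Σ_{ℓ≠j} v^{(ℓ)}(z) = v^{(j)}(z)·Σ_{ℓ≠j} c^{(ℓ)}(z) identically for all z = (z₁,z₂) with z₁,z₂ ≠ 0 and all j. -/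

import Mathlib

open Complex Matrix BigOperators Finset

noncomputable def omegaN (N : ℕ) : ℂ := Complex.exp (-2 * Real.pi * Complex.I / N)

/-- ω_N raised to an exponent given modulo N. -/
noncomputable def eN (N : ℕ) (x : ZMod N) : ℂ := omegaN N ^ x.val

/-- The centered 2D DFT matrix F = (ω_N^{ν·n}) indexed by (ZMod N)², which
realizes the index set Λ_N = {-N/2,…,N/2-1}² with periodic wrapping. -/
noncomputable def dft2 (N : ℕ) [NeZero N] :
    Matrix (ZMod N × ZMod N) (ZMod N × ZMod N) ℂ :=
  Matrix.of fun ν n => eN N (ν.1 * n.1 + ν.2 * n.2)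

/-- Centering map identifying Fin L with {-n,…,n} ⊂ ZMod N (L = 2n+1). -/
def cenM (N L : ℕ) (i : Fin L) : ZMod N := ((i : ℕ) : ZMod N) - (((L - 1) / 2 : ℕ) : ZMod N)

/-- (W a)_x = Σ_{r ∈ Λ_L} a_r ω_N^{-r·x}, the trigonometric-polynomial model map. -/
noncomputable def Wmap (N L : ℕ) (a : Fin L × Fin L → ℂ) (x : ZMod N × ZMod N) : ℂ :=
  ∑ r : Fin L × Fin L, a r * eN N (-(cenM N L r.1 * x.1 + cenM N L r.2 * x.2))

/-- The cyclic-shift (block Hankel) matrix Y⁽ʲ⁾ = (y_{(ν-r) mod Λ_N}). -/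
noncomputable def Yshift (N L : ℕ) (y : ZMod N × ZMod N → ℂ) :
    Matrix (ZMod N × ZMod N) (Fin L × Fin L) ℂ :=
  Matrix.of fun ν r => y (ν.1 - cenM N L r.1, ν.2 - cenM N L r.2)

/-- The MOCCA matrix A_N with (j,j)-block -(Σ_{ℓ≠j} Y⁽ˡ⁾) and (j,ℓ)-block Y⁽ʲ⁾ for ℓ≠j. -/
noncomputable def moccaA (N L Nc : ℕ) (y : Fin Nc → ZMod N × ZMod N → ℂ) :
    Matrix (Fin Nc × (ZMod N × ZMod N)) (Fin Nc × (Fin L × Fin L)) ℂ :=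
  Matrix.of fun p q =>
    if q.1 = p.1 then -(∑ ℓ ∈ Finset.univ.erase p.1, Yshift N L (y ℓ) p.2 q.2)
    else Yshift N L (y p.1) p.2 q.2


/-- The bivariate Laurent polynomial with coefficients supported on Λ_K = {-(K-1)/2,…,(K-1)/2}². -/
noncomputable def lpz (K : ℕ) (a : Fin K × Fin K → ℂ) (z : ℂ × ℂ) : ℂ :=
  ∑ r : Fin K × Fin K,
    a r * z.1 ^ (((r.1 : ℕ) : ℤ) - ((K : ℤ) - 1) / 2) *
      z.2 ^ (((r.2 : ℕ) : ℤ) - ((K : ℤ) - 1) / 2)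

/-! ### Auxiliary lemmas -/

lemma omega_pow_N (N : ℕ) [NeZero N] : omegaN N ^ N = 1 := by
  rw [omegaN, ← Complex.exp_nat_mul]
  have hN : (N : ℂ) ≠ 0 := Nat.cast_ne_zero.mpr (NeZero.ne N)
  rw [show (N : ℂ) * (-2 * Real.pi * Complex.I / N) = (-1 : ℤ) * (2 * Real.pi * Complex.I) by
    field_simp; ring]
  exact Complex.exp_int_mul_two_pi_mul_I (-1)

lemma omega_pow_mod (N : ℕ) [NeZero N] (a : ℕ) : omegaN N ^ a = omegaN N ^ (a % N) := by
  conv_lhs => rw [← Nat.div_add_mod a N]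
  rw [pow_add, pow_mul, omega_pow_N, one_pow, one_mul]

lemma eN_add (N : ℕ) [NeZero N] (u w : ZMod N) : eN N (u + w) = eN N u * eN N w := by
  rw [eN, eN, eN, ← pow_add, ZMod.val_add, ← omega_pow_mod]

lemma eN_zero (N : ℕ) [NeZero N] : eN N 0 = 1 := by
  simp [eN, ZMod.val_zero]

lemma omega_prim (N : ℕ) [NeZero N] : IsPrimitiveRoot (omegaN N) N := by
  have h := Complex.isPrimitiveRoot_exp N (NeZero.ne N)
  have : omegaN N = (Complex.exp (2 * Real.pi * Complex.I / N))⁻¹ := by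
    rw [← Complex.exp_neg, omegaN]; ring_nf
  rw [this]; exact h.inv

lemma sum_eN_row (N : ℕ) [NeZero N] (d : ZMod N) :
    ∑ ν : ZMod N, eN N (d * ν) = if d = 0 then (N : ℂ) else 0 := by
  have key : ∀ ν : ZMod N, eN N (d * ν) = (eN N d) ^ ν.val := by
    intro ν
    rw [eN, eN, ← pow_mul, ZMod.val_mul, ← omega_pow_mod]
  rw [Finset.sum_congr rfl (fun ν _ => key ν)]
  have hsum : ∑ ν : ZMod N, (eN N d) ^ ν.val = ∑ i ∈ Finset.range N, (eN N d) ^ i := by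
    refine Finset.sum_nbij' (i := fun ν => ν.val) (j := fun i => (i : ZMod N)) ?_ ?_ ?_ ?_ ?_
    · intro ν _; exact Finset.mem_range.mpr (ZMod.val_lt ν)
    · intro i _; exact Finset.mem_univ _
    · intro ν _; exact ZMod.natCast_rightInverse ν
    · intro i hi; exact ZMod.val_cast_of_lt (Finset.mem_range.mp hi)
    · intro ν _; rfl
  rw [hsum]
  by_cases hd : d = 0
  · simp [hd, eN_zero]
  · have hne1 : eN N d ≠ 1 := by
      rw [eN]
      exact (omega_prim N).pow_ne_one_of_pos_of_lt (Nat.pos_of_ne_zero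
        (fun h => hd ((ZMod.val_eq_zero d).mp h))).ne' (ZMod.val_lt d)
    rw [if_neg hd, geom_sum_eq hne1]
    have : eN N d ^ N = 1 := by
      rw [eN, ← pow_mul, mul_comm, pow_mul, omega_pow_N, one_pow]
    rw [this, sub_self, zero_div]

lemma dft_vanish (N : ℕ) [NeZero N] (g : ZMod N × ZMod N → ℂ)
    (h : ∀ ν : ZMod N × ZMod N, ∑ x : ZMod N × ZMod N, eN N (ν.1 * x.1 + ν.2 * x.2) * g x = 0)
    (x0 : ZMod N × ZMod N) : g x0 = 0 := by
  have step1 : ∀ ν x : ZMod N × ZMod N,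
      eN N (-(ν.1 * x0.1 + ν.2 * x0.2)) * (eN N (ν.1 * x.1 + ν.2 * x.2) * g x)
        = (eN N ((x.1 - x0.1) * ν.1) * eN N ((x.2 - x0.2) * ν.2)) * g x := by
    intro ν x
    rw [← mul_assoc, ← eN_add, show -(ν.1 * x0.1 + ν.2 * x0.2) + (ν.1 * x.1 + ν.2 * x.2)
      = (x.1 - x0.1) * ν.1 + ((x.2 - x0.2) * ν.2) by ring, eN_add]
  have key : ∑ x : ZMod N × ZMod N,
      ((∑ a : ZMod N, eN N ((x.1 - x0.1) * a)) * (∑ b : ZMod N, eN N ((x.2 - x0.2) * b))) * g x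
        = 0 := by
    have := calc
      ∑ ν : ZMod N × ZMod N, eN N (-(ν.1 * x0.1 + ν.2 * x0.2)) *
          (∑ x : ZMod N × ZMod N, eN N (ν.1 * x.1 + ν.2 * x.2) * g x)
        = ∑ ν : ZMod N × ZMod N, ∑ x : ZMod N × ZMod N,
            eN N (-(ν.1 * x0.1 + ν.2 * x0.2)) * (eN N (ν.1 * x.1 + ν.2 * x.2) * g x) := by
          simp only [Finset.mul_sum]
      _ = ∑ x : ZMod N × ZMod N, ∑ ν : ZMod N × ZMod N,
            (eN N ((x.1 - x0.1) * ν.1) * eN N ((x.2 - x0.2) * ν.2)) * g x := by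
          rw [Finset.sum_comm]
          exact Finset.sum_congr rfl fun x _ => Finset.sum_congr rfl fun ν _ => step1 ν x
      _ = ∑ x : ZMod N × ZMod N,
            ((∑ a : ZMod N, eN N ((x.1 - x0.1) * a)) * (∑ b : ZMod N, eN N ((x.2 - x0.2) * b)))
              * g x := by
          refine Finset.sum_congr rfl fun x _ => ?_
          rw [← Finset.sum_mul, Fintype.sum_prod_type, Finset.sum_mul_sum]
    rw [← this]
    simp [h]
  have key2 : ∑ x : ZMod N × ZMod N,
      ((if x.1 = x0.1 then (N : ℂ) else 0) * (if x.2 = x0.2 then (N : ℂ) else 0)) * g x = 0 := by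
    have congr1 : ∑ x : ZMod N × ZMod N,
        ((if x.1 = x0.1 then (N : ℂ) else 0) * (if x.2 = x0.2 then (N : ℂ) else 0)) * g x
          = ∑ x : ZMod N × ZMod N,
        ((∑ a : ZMod N, eN N ((x.1 - x0.1) * a)) * (∑ b : ZMod N, eN N ((x.2 - x0.2) * b)))
          * g x := by
      refine Finset.sum_congr rfl fun x _ => ?_
      simp only [sum_eN_row, sub_eq_zero]
    rw [congr1]; exact key
  rw [Finset.sum_eq_single x0] at key2
  · have hN : (N : ℂ) ≠ 0 := Nat.cast_ne_zero.mpr (NeZero.ne N)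
    simpa [hN] using key2
  · intro x _ hx
    by_cases h1 : x.1 = x0.1
    · have h2 : x.2 ≠ x0.2 := by
        intro h2; exact hx (Prod.ext h1 h2)
      simp [h2]
    · simp [h1]
  · intro h; exact absurd (Finset.mem_univ x0) h

/-! ### Coefficient convolution -/

noncomputable def convc (L : ℕ) (a b : Fin L × Fin L → ℂ)
    (s : Fin (2 * L - 1) × Fin (2 * L - 1)) : ℂ :=
  ∑ r : Fin L × Fin L, ∑ r' : Fin L × Fin L,
    if ((r.1 : ℕ) + (r'.1 : ℕ) = (s.1 : ℕ) ∧ (r.2 : ℕ) + (r'.2 : ℕ) = (s.2 : ℕ))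
      then a r * b r' else 0

lemma sum_conv_mul (L : ℕ) (hL : 0 < L) (a b : Fin L × Fin L → ℂ)
    (X : Fin (2 * L - 1) × Fin (2 * L - 1) → ℂ) :
    ∑ s : Fin (2 * L - 1) × Fin (2 * L - 1), convc L a b s * X s
      = ∑ r : Fin L × Fin L, ∑ r' : Fin L × Fin L, a r * b r' *
          X (⟨(r.1 : ℕ) + (r'.1 : ℕ), by have := r.1.2; have := r'.1.2; omega⟩,
             ⟨(r.2 : ℕ) + (r'.2 : ℕ), by have := r.2.2; have := r'.2.2; omega⟩) := by
  simp only [convc, Finset.sum_mul, ite_mul, zero_mul]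
  rw [Finset.sum_comm]
  refine Finset.sum_congr rfl fun r _ => ?_
  rw [Finset.sum_comm]
  refine Finset.sum_congr rfl fun r' _ => ?_
  rw [Finset.sum_eq_single
    ((⟨(r.1 : ℕ) + (r'.1 : ℕ), by have := r.1.2; have := r'.1.2; omega⟩,
      ⟨(r.2 : ℕ) + (r'.2 : ℕ), by have := r.2.2; have := r'.2.2; omega⟩) :
        Fin (2 * L - 1) × Fin (2 * L - 1))]
  · rw [if_pos ⟨rfl, rfl⟩]
  · intro s _ hs
    rw [if_neg]
    rintro ⟨h1, h2⟩
    apply hs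
    apply Prod.ext
    · exact Fin.ext h1.symm
    · exact Fin.ext h2.symm
  · intro h; exact absurd (Finset.mem_univ _) h

lemma cen_add (N L n : ℕ) (hL : L = 2 * n + 1) (u u' : Fin L)
    (h : (u : ℕ) + (u' : ℕ) < 2 * L - 1) :
    cenM N (2 * L - 1) ⟨(u : ℕ) + (u' : ℕ), h⟩ = cenM N L u + cenM N L u' := by
  simp only [cenM]
  have e1 : (2 * L - 1 - 1) / 2 = 2 * n := by omega
  have e2 : (L - 1) / 2 = n := by omega
  rw [e1, e2]
  push_cast
  ring

lemma Wmap_mul (N L n : ℕ) [NeZero N] (hL : L = 2 * n + 1) (a b : Fin L × Fin L → ℂ)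
    (x : ZMod N × ZMod N) :
    Wmap N (2 * L - 1) (convc L a b) x = Wmap N L a x * Wmap N L b x := by
  have hL0 : 0 < L := by omega
  rw [Wmap, sum_conv_mul L hL0 a b
    (fun s => eN N (-(cenM N (2 * L - 1) s.1 * x.1 + cenM N (2 * L - 1) s.2 * x.2)))]
  rw [Wmap, Wmap, Finset.sum_mul_sum]
  refine Finset.sum_congr rfl fun r _ => Finset.sum_congr rfl fun r' _ => ?_
  rw [cen_add N L n hL, cen_add N L n hL,
      show -((cenM N L r.1 + cenM N L r'.1) * x.1 + (cenM N L r.2 + cenM N L r'.2) * x.2)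
        = -(cenM N L r.1 * x.1 + cenM N L r.2 * x.2)
          + -(cenM N L r'.1 * x.1 + cenM N L r'.2 * x.2) by ring,
      eN_add]
  ring

lemma lpz_mul (L n : ℕ) (hL : L = 2 * n + 1) (a b : Fin L × Fin L → ℂ) (z : ℂ × ℂ)
    (hz1 : z.1 ≠ 0) (hz2 : z.2 ≠ 0) :
    lpz (2 * L - 1) (convc L a b) z = lpz L a z * lpz L b z := by
  have hL0 : 0 < L := by omega
  rw [lpz]
  simp only [mul_assoc]
  rw [sum_conv_mul L hL0 a b
    (fun s => z.1 ^ (((s.1 : ℕ) : ℤ) - (((2 * L - 1 : ℕ) : ℤ) - 1) / 2) *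
      z.2 ^ (((s.2 : ℕ) : ℤ) - (((2 * L - 1 : ℕ) : ℤ) - 1) / 2))]
  rw [lpz, lpz, Finset.sum_mul_sum]
  refine Finset.sum_congr rfl fun r _ => Finset.sum_congr rfl fun r' _ => ?_
  have hexp1 : (((r.1 : ℕ) + (r'.1 : ℕ) : ℕ) : ℤ) - (((2 * L - 1 : ℕ) : ℤ) - 1) / 2
      = (((r.1 : ℕ) : ℤ) - ((L : ℤ) - 1) / 2) + (((r'.1 : ℕ) : ℤ) - ((L : ℤ) - 1) / 2) := by
    subst hL; push_cast; omega
  have hexp2 : (((r.2 : ℕ) + (r'.2 : ℕ) : ℕ) : ℤ) - (((2 * L - 1 : ℕ) : ℤ) - 1) / 2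
      = (((r.2 : ℕ) : ℤ) - ((L : ℤ) - 1) / 2) + (((r'.2 : ℕ) : ℤ) - ((L : ℤ) - 1) / 2) := by
    subst hL; push_cast; omega
  simp only []
  rw [hexp1, hexp2, zpow_add₀ hz1, zpow_add₀ hz2]
  ring

lemma Yconv (N L : ℕ) [NeZero N] (mm : ZMod N × ZMod N → ℂ) (cc w : Fin L × Fin L → ℂ)
    (ν : ZMod N × ZMod N) :
    ∑ r : Fin L × Fin L,
        Yshift N L ((dft2 N).mulVec (fun x => mm x * Wmap N L cc x)) ν r * w r
      = ∑ x : ZMod N × ZMod N, eN N (ν.1 * x.1 + ν.2 * x.2) *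
          (mm x * (Wmap N L cc x * Wmap N L w x)) := by
  simp only [Yshift, dft2, Matrix.mulVec, Matrix.of_apply, dotProduct, Finset.sum_mul]
  rw [Finset.sum_comm]
  refine Finset.sum_congr rfl fun x _ => ?_
  have split : ∀ r : Fin L × Fin L,
      eN N ((ν.1 - cenM N L r.1) * x.1 + (ν.2 - cenM N L r.2) * x.2)
        = eN N (ν.1 * x.1 + ν.2 * x.2)
          * eN N (-(cenM N L r.1 * x.1 + cenM N L r.2 * x.2)) := by
    intro r
    rw [← eN_add]
    congr 1
    ring
  conv_rhs => rw [show Wmap N L w x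
    = ∑ r : Fin L × Fin L, w r * eN N (-(cenM N L r.1 * x.1 + cenM N L r.2 * x.2)) from rfl]
  simp only [Finset.mul_sum]
  refine Finset.sum_congr rfl fun r _ => ?_
  rw [split]
  ring

/-- If V_m has full column rank (2L-1)², then any nullspace vector v of the MOCCA matrix
satisfies the Laurent polynomial relations c⁽ʲ⁾·Σ_{ℓ≠j}v⁽ˡ⁾ = v⁽ʲ⁾·Σ_{ℓ≠j}c⁽ˡ⁾ on (ℂ∖{0})². -/
theorem stmt3 (N L n Nc : ℕ) [NeZero N] (hN : Even N) (hL : L = 2 * n + 1) (h2L : 2 * L < N)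
    (m : ZMod N × ZMod N → ℂ) (c : Fin Nc → Fin L × Fin L → ℂ)
    (y : Fin Nc → ZMod N × ZMod N → ℂ)
    (hmodel : ∀ j, y j = (dft2 N).mulVec (fun x => m x * Wmap N L (c j) x))
    (hrank : ∀ a : Fin (2 * L - 1) × Fin (2 * L - 1) → ℂ,
      (∀ x : ZMod N × ZMod N, m x ≠ 0 → Wmap N (2 * L - 1) a x = 0) → a = 0)
    (v : Fin Nc → Fin L × Fin L → ℂ)
    (hv : (moccaA N L Nc y).mulVec (fun q => v q.1 q.2) = 0)
    (j : Fin Nc) (z : ℂ × ℂ) (hz1 : z.1 ≠ 0) (hz2 : z.2 ≠ 0) :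
    lpz L (c j) z * (∑ ℓ ∈ Finset.univ.erase j, lpz L (v ℓ) z) =
      lpz L (v j) z * (∑ ℓ ∈ Finset.univ.erase j, lpz L (c ℓ) z) := by
  classical
  set vt : Fin L × Fin L → ℂ := fun r => ∑ ℓ ∈ Finset.univ.erase j, v ℓ r with hvt
  set ct : Fin L × Fin L → ℂ := fun r => ∑ ℓ ∈ Finset.univ.erase j, c ℓ r with hct
  have hWvt : ∀ x, Wmap N L vt x = ∑ ℓ ∈ Finset.univ.erase j, Wmap N L (v ℓ) x := by
    intro x
    simp only [Wmap, hvt, Finset.sum_mul]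
    rw [Finset.sum_comm]
  have hWct : ∀ x, Wmap N L ct x = ∑ ℓ ∈ Finset.univ.erase j, Wmap N L (c ℓ) x := by
    intro x
    simp only [Wmap, hct, Finset.sum_mul]
    rw [Finset.sum_comm]
  have hlvt : lpz L vt z = ∑ ℓ ∈ Finset.univ.erase j, lpz L (v ℓ) z := by
    simp only [lpz, hvt, Finset.sum_mul]
    rw [Finset.sum_comm]
  have hlct : lpz L ct z = ∑ ℓ ∈ Finset.univ.erase j, lpz L (c ℓ) z := by
    simp only [lpz, hct, Finset.sum_mul]
    rw [Finset.sum_comm]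
  -- The nullspace equation in Fourier form
  have hnull : ∀ ν : ZMod N × ZMod N, ∑ x : ZMod N × ZMod N, eN N (ν.1 * x.1 + ν.2 * x.2) *
      (m x * (Wmap N L (c j) x * Wmap N L vt x - Wmap N L ct x * Wmap N L (v j) x)) = 0 := by
    intro ν
    have h0 := congrFun hv (j, ν)
    simp only [Matrix.mulVec, dotProduct, Pi.zero_apply] at h0
    rw [Fintype.sum_prod_type] at h0
    rw [← Finset.add_sum_erase _ _ (Finset.mem_univ j)] at h0
    have hdiag : ∀ r : Fin L × Fin L, moccaA N L Nc y (j, ν) (j, r)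
        = -(∑ ℓ ∈ Finset.univ.erase j, Yshift N L (y ℓ) ν r) := by
      intro r; simp [moccaA]
    have hoff : ∀ (ℓ : Fin Nc), ℓ ≠ j → ∀ r : Fin L × Fin L,
        moccaA N L Nc y (j, ν) (ℓ, r) = Yshift N L (y j) ν r := by
      intro ℓ hℓ r; simp [moccaA, hℓ]
    have e1 : ∑ r : Fin L × Fin L, moccaA N L Nc y (j, ν) (j, r) * v j r
        = -(∑ x : ZMod N × ZMod N, eN N (ν.1 * x.1 + ν.2 * x.2) *
            (m x * (Wmap N L ct x * Wmap N L (v j) x))) := by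
      calc ∑ r : Fin L × Fin L, moccaA N L Nc y (j, ν) (j, r) * v j r
          = ∑ r : Fin L × Fin L,
              -(∑ ℓ ∈ Finset.univ.erase j, Yshift N L (y ℓ) ν r * v j r) := by
            refine Finset.sum_congr rfl fun r _ => ?_
            rw [hdiag r, neg_mul, Finset.sum_mul]
        _ = -(∑ ℓ ∈ Finset.univ.erase j, ∑ r : Fin L × Fin L,
              Yshift N L (y ℓ) ν r * v j r) := by
            simp only [← Finset.sum_neg_distrib]
            rw [Finset.sum_comm]
        _ = -(∑ ℓ ∈ Finset.univ.erase j, ∑ x : ZMod N × ZMod N,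
              eN N (ν.1 * x.1 + ν.2 * x.2) * (m x * (Wmap N L (c ℓ) x * Wmap N L (v j) x))) := by
            congr 1
            refine Finset.sum_congr rfl fun ℓ _ => ?_
            rw [hmodel ℓ]
            exact Yconv N L m (c ℓ) (v j) ν
        _ = -(∑ x : ZMod N × ZMod N, eN N (ν.1 * x.1 + ν.2 * x.2) *
              (m x * (Wmap N L ct x * Wmap N L (v j) x))) := by
            congr 1
            rw [Finset.sum_comm]
            refine Finset.sum_congr rfl fun x _ => ?_
            rw [hWct x, Finset.sum_mul, Finset.mul_sum, Finset.mul_sum]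
    have e2 : ∑ ℓ ∈ Finset.univ.erase j, ∑ r : Fin L × Fin L,
        moccaA N L Nc y (j, ν) (ℓ, r) * v ℓ r
        = ∑ x : ZMod N × ZMod N, eN N (ν.1 * x.1 + ν.2 * x.2) *
            (m x * (Wmap N L (c j) x * Wmap N L vt x)) := by
      calc ∑ ℓ ∈ Finset.univ.erase j, ∑ r : Fin L × Fin L,
            moccaA N L Nc y (j, ν) (ℓ, r) * v ℓ r
          = ∑ ℓ ∈ Finset.univ.erase j, ∑ x : ZMod N × ZMod N,
              eN N (ν.1 * x.1 + ν.2 * x.2) * (m x * (Wmap N L (c j) x * Wmap N L (v ℓ) x)) := by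
            refine Finset.sum_congr rfl fun ℓ hℓ => ?_
            have hne : ℓ ≠ j := (Finset.mem_erase.mp hℓ).1
            rw [show (∑ r : Fin L × Fin L, moccaA N L Nc y (j, ν) (ℓ, r) * v ℓ r)
              = ∑ r : Fin L × Fin L, Yshift N L (y j) ν r * v ℓ r from
                Finset.sum_congr rfl fun r _ => by rw [hoff ℓ hne r]]
            rw [hmodel j]
            exact Yconv N L m (c j) (v ℓ) ν
        _ = ∑ x : ZMod N × ZMod N, eN N (ν.1 * x.1 + ν.2 * x.2) *
              (m x * (Wmap N L (c j) x * Wmap N L vt x)) := by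
            rw [Finset.sum_comm]
            refine Finset.sum_congr rfl fun x _ => ?_
            rw [hWvt x, Finset.mul_sum, Finset.mul_sum, Finset.mul_sum]
    rw [e1, e2] at h0
    simp only [mul_sub, Finset.sum_sub_distrib]
    linear_combination h0
  -- invert the DFT
  have hg : ∀ x, m x * (Wmap N L (c j) x * Wmap N L vt x
      - Wmap N L ct x * Wmap N L (v j) x) = 0 :=
    fun x => dft_vanish N _ hnull x
  -- apply the rank condition
  have hAx : ∀ x, Wmap N (2 * L - 1)
      (fun s => convc L (c j) vt s - convc L ct (v j) s) x
      = Wmap N L (c j) x * Wmap N L vt x - Wmap N L ct x * Wmap N L (v j) x := by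
    intro x
    have hsub : Wmap N (2 * L - 1) (fun s => convc L (c j) vt s - convc L ct (v j) s) x
        = Wmap N (2 * L - 1) (convc L (c j) vt) x - Wmap N (2 * L - 1) (convc L ct (v j)) x := by
      simp only [Wmap, sub_mul, Finset.sum_sub_distrib]
    rw [hsub, Wmap_mul N L n hL, Wmap_mul N L n hL]
  have hA0 : (fun s => convc L (c j) vt s - convc L ct (v j) s) = 0 := by
    refine hrank _ fun x hmx => ?_
    rw [hAx x]
    exact (mul_eq_zero.mp (hg x)).resolve_left hmx
  have hconv : ∀ s, convc L (c j) vt s = convc L ct (v j) s := by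
    intro s
    have := congrFun hA0 s
    simpa [sub_eq_zero] using this
  have hlp : lpz (2 * L - 1) (convc L (c j) vt) z = lpz (2 * L - 1) (convc L ct (v j)) z := by
    unfold lpz
    exact Finset.sum_congr rfl fun s _ => by rw [hconv s]
  rw [lpz_mul L n hL _ _ z hz1 hz2, lpz_mul L n hL _ _ z hz1 hz2] at hlp
  rw [← hlvt, ← hlct, hlp, mul_comm]
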